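/- Let p > 1, r ≥ 1 be constants, and for a, b > 0 and x, y ∈ ℝ^N define the expression D(a,b,x,y) = |x|^{p-2} x · (x − r(b/a)^{r-1} y + (r−1)(b/a)^r x) + |y|^{p-2} y · (y − r(a/b)^{r-1} x + (r−1)(a/b)^r y). If p ≥ r then D(a,b,x,y) ≥ 0 for all a, b > 0 and x, y ∈ ℝ^N. -/

import Mathlib

open Set RealInnerProductSpace

/-- Scalar Young-type inequality: the key ingredient. -/
private lemma young3 (p r t X Y : ℝ) (hp : 1 < p) (hr : 1 ≤ r) (hpr : r ≤ p)
    (ht : 0 < t) (hX : 0 ≤ X) (hY : 0 ≤ Y) :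
    r * t ^ (r - 1) * (X ^ (p - 1) * Y) ≤
      (r - 1) * (t ^ r * X ^ p) + (p - r) / p * X ^ p + r / p * Y ^ p := by
  have hp0 : (0:ℝ) < p := by linarith
  have hr0 : (0:ℝ) < r := by linarith
  have hr1 : (0:ℝ) ≤ r - 1 := by linarith
  have hpr' : (0:ℝ) ≤ (p - r) / p := div_nonneg (by linarith) hp0.le
  rcases eq_or_lt_of_le hX with hX0 | hX0
  · rw [← hX0]
    rw [Real.zero_rpow (ne_of_gt (by linarith : (0:ℝ) < p - 1)),
        Real.zero_rpow (ne_of_gt hp0)]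
    have h3 : 0 ≤ r / p * Y ^ p := mul_nonneg (div_nonneg hr0.le hp0.le) (Real.rpow_nonneg hY p)
    nlinarith
  rcases eq_or_lt_of_le hY with hY0 | hY0
  · rw [← hY0]
    rw [Real.zero_rpow (ne_of_gt hp0)]
    have h1 : 0 ≤ t ^ r * X ^ p := mul_nonneg (Real.rpow_nonneg ht.le r) (Real.rpow_nonneg hX p)
    have h2 : 0 ≤ X ^ p := Real.rpow_nonneg hX p
    have hA := mul_nonneg hr1 h1
    have hB := mul_nonneg hpr' h2
    nlinarith
  -- now X > 0, Y > 0
  have key := Real.geom_mean_le_arith_mean3_weighted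
    (w₁ := (r - 1) / r) (w₂ := (p - r) / (p * r)) (w₃ := 1 / p)
    (p₁ := t ^ r * X ^ p) (p₂ := X ^ p) (p₃ := Y ^ p)
    (div_nonneg hr1 hr0.le) (div_nonneg (by linarith) (by positivity)) (by positivity)
    (mul_nonneg (Real.rpow_nonneg ht.le r) (Real.rpow_nonneg hX p))
    (Real.rpow_nonneg hX p) (Real.rpow_nonneg hY p)
    (by field_simp; ring)
  have ht' : (t ^ r) ^ ((r - 1) / r) = t ^ (r - 1) := by
    rw [← Real.rpow_mul ht.le]; congr 1; field_simp
  have hx1 : (X ^ p) ^ ((r - 1) / r) * (X ^ p) ^ ((p - r) / (p * r)) = X ^ (p - 1) := by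
    rw [← Real.rpow_mul hX, ← Real.rpow_mul hX, ← Real.rpow_add hX0]
    congr 1; field_simp; ring
  have hy1 : (Y ^ p) ^ (1 / p) = Y := by
    rw [← Real.rpow_mul hY, mul_one_div, div_self (ne_of_gt hp0), Real.rpow_one]
  have e1 : (t ^ r * X ^ p) ^ ((r - 1) / r) * (X ^ p) ^ ((p - r) / (p * r)) * (Y ^ p) ^ (1 / p)
      = t ^ (r - 1) * (X ^ (p - 1) * Y) := by
    rw [Real.mul_rpow (Real.rpow_nonneg ht.le r) (Real.rpow_nonneg hX p)]
    calc (t ^ r) ^ ((r - 1) / r) * (X ^ p) ^ ((r - 1) / r) * (X ^ p) ^ ((p - r) / (p * r))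
          * (Y ^ p) ^ (1 / p)
        = (t ^ r) ^ ((r - 1) / r) * ((X ^ p) ^ ((r - 1) / r) * (X ^ p) ^ ((p - r) / (p * r)))
          * (Y ^ p) ^ (1 / p) := by ring
      _ = t ^ (r - 1) * (X ^ (p - 1) * Y) := by rw [ht', hx1, hy1]; ring
  rw [e1] at key
  have key' := mul_le_mul_of_nonneg_left key hr0.le
  calc r * t ^ (r - 1) * (X ^ (p - 1) * Y)
      = r * (t ^ (r - 1) * (X ^ (p - 1) * Y)) := by ring
    _ ≤ r * ((r - 1) / r * (t ^ r * X ^ p) + (p - r) / (p * r) * X ^ p + 1 / p * Y ^ p) := key'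
    _ = (r - 1) * (t ^ r * X ^ p) + (p - r) / p * X ^ p + r / p * Y ^ p := by
        field_simp

private lemma rpow_shift (p Z : ℝ) (hp : 1 < p) (hZ : 0 ≤ Z) :
    Z ^ (p - 2) * (Z ^ (2:ℕ)) = Z ^ p ∧ Z ^ (p - 2) * Z = Z ^ (p - 1) := by
  rcases eq_or_lt_of_le hZ with h0 | h0
  · rw [← h0]
    constructor
    · norm_num
      rw [Real.zero_rpow (ne_of_gt (by linarith : (0:ℝ) < p))]
    · rw [mul_zero, Real.zero_rpow (ne_of_gt (by linarith : (0:ℝ) < p - 1))]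
  · constructor
    · rw [← Real.rpow_natCast Z 2, ← Real.rpow_add h0]
      norm_num
    · nth_rewrite 2 [← Real.rpow_one Z]
      rw [← Real.rpow_add h0]
      congr 1; ring

theorem pointwise_diaz_saa_p_laplacian
    (N : ℕ) (p r : ℝ) (hp : 1 < p) (hr : 1 ≤ r) (hpr : r ≤ p)
    (a b : ℝ) (ha : 0 < a) (hb : 0 < b)
    (x y : EuclideanSpace ℝ (Fin N)) :
    0 ≤ ‖x‖ ^ (p - 2) * ⟪x, x - (r * (b / a) ^ (r - 1)) • y + ((r - 1) * (b / a) ^ r) • x⟫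
      + ‖y‖ ^ (p - 2) * ⟪y, y - (r * (a / b) ^ (r - 1)) • x + ((r - 1) * (a / b) ^ r) • y⟫ := by
  have hr0 : (0:ℝ) < r := by linarith
  set X := ‖x‖ with hXdef
  set Y := ‖y‖ with hYdef
  have hX : 0 ≤ X := norm_nonneg x
  have hY : 0 ≤ Y := norm_nonneg y
  set t : ℝ := b / a with htdef
  set s : ℝ := a / b with hsdef
  have ht : 0 < t := by positivity
  have hs : 0 < s := by positivity
  have hip : ⟪x, y⟫ ≤ X * Y := real_inner_le_norm x y
  have e1 : ⟪x, x - (r * t ^ (r - 1)) • y + ((r - 1) * t ^ r) • x⟫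
      = X ^ (2:ℕ) - (r * t ^ (r - 1)) * ⟪x, y⟫ + (r - 1) * t ^ r * X ^ (2:ℕ) := by
    simp only [inner_add_right, inner_sub_right, real_inner_smul_right,
      real_inner_self_eq_norm_sq]
    rfl
  have e2 : ⟪y, y - (r * s ^ (r - 1)) • x + ((r - 1) * s ^ r) • y⟫
      = Y ^ (2:ℕ) - (r * s ^ (r - 1)) * ⟪x, y⟫ + (r - 1) * s ^ r * Y ^ (2:ℕ) := by
    simp only [inner_add_right, inner_sub_right, real_inner_smul_right,
      real_inner_self_eq_norm_sq, real_inner_comm y x]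
    rfl
  rw [e1, e2]
  obtain ⟨ex2, ex1⟩ := rpow_shift p X hp hX
  obtain ⟨ey2, ey1⟩ := rpow_shift p Y hp hY
  have hXp2 : 0 ≤ X ^ (p - 2) := Real.rpow_nonneg hX _
  have hYp2 : 0 ≤ Y ^ (p - 2) := Real.rpow_nonneg hY _
  have hc1 : 0 ≤ r * t ^ (r - 1) := mul_nonneg hr0.le (Real.rpow_nonneg ht.le _)
  have hc2 : 0 ≤ r * s ^ (r - 1) := mul_nonneg hr0.le (Real.rpow_nonneg hs.le _)
  -- Replace the inner product by X * Y
  have step1 : X ^ (p - 2) * (X ^ (2:ℕ) - (r * t ^ (r - 1)) * (X * Y) + (r - 1) * t ^ r * X ^ (2:ℕ))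
      + Y ^ (p - 2) * (Y ^ (2:ℕ) - (r * s ^ (r - 1)) * (X * Y) + (r - 1) * s ^ r * Y ^ (2:ℕ))
      ≤ X ^ (p - 2) * (X ^ (2:ℕ) - (r * t ^ (r - 1)) * ⟪x, y⟫ + (r - 1) * t ^ r * X ^ (2:ℕ))
      + Y ^ (p - 2) * (Y ^ (2:ℕ) - (r * s ^ (r - 1)) * ⟪x, y⟫ + (r - 1) * s ^ r * Y ^ (2:ℕ)) := by
    nlinarith [mul_nonneg (mul_nonneg hXp2 hc1) (sub_nonneg.mpr hip),
      mul_nonneg (mul_nonneg hYp2 hc2) (sub_nonneg.mpr hip)]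
  refine le_trans ?_ step1
  -- Now everything is scalar; rewrite rpow products
  have expand : X ^ (p - 2) * (X ^ (2:ℕ) - (r * t ^ (r - 1)) * (X * Y) + (r - 1) * t ^ r * X ^ (2:ℕ))
      + Y ^ (p - 2) * (Y ^ (2:ℕ) - (r * s ^ (r - 1)) * (X * Y) + (r - 1) * s ^ r * Y ^ (2:ℕ))
      = X ^ p + Y ^ p + (r - 1) * (t ^ r * X ^ p) + (r - 1) * (s ^ r * Y ^ p)
        - r * t ^ (r - 1) * (X ^ (p - 1) * Y) - r * s ^ (r - 1) * (Y ^ (p - 1) * X) := by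
    rw [← ex2, ← ey2, ← ex1, ← ey1]
    ring
  rw [expand]
  have k1 := young3 p r t X Y hp hr hpr ht hX hY
  have k2 := young3 p r s Y X hp hr hpr hs hY hX
  have hsum : (p - r) / p + r / p = 1 := by field_simp; ring
  have hx' : (p - r) / p * X ^ p + r / p * X ^ p = X ^ p := by
    rw [← add_mul, hsum, one_mul]
  have hy' : (p - r) / p * Y ^ p + r / p * Y ^ p = Y ^ p := by
    rw [← add_mul, hsum, one_mul]
  linarith [k1, k2]
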